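/- In the reduced FA instance with m > 1, if π* is an optimal partition, then for each h ∈ [3m] there exists a coalition C ∈ π* with K^h ⊆ C (no element-clique is split across coalitions). -/

import Mathlib

open Finset

/-- FA utility of agent `i` with friend set `t` for a coalition `C` containing her:
`u_i(C) = |C ∩ F_i| − |C ∩ E_i| / n`, where `E_i = N \ (F_i ∪ {i})`. -/
def faUtil (n : ℕ) (t : Finset (Fin n)) (i : Fin n) (C : Finset (Fin n)) : ℚ :=
  ((C ∩ t).card : ℚ) - ((C \ (t ∪ {i})).card : ℚ) / (n : ℚ)

/-- Social welfare of a partition of the agents (`SW(π) = Σ_i u_i(π(i))`). -/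
def faSW (n : ℕ) (F : Fin n → Finset (Fin n))
    (π : Finpartition (univ : Finset (Fin n))) : ℚ :=
  ∑ C ∈ π.parts, ∑ i ∈ C, faUtil n (F i) i C

section Gen
variable {n : ℕ}

def coW (F : Fin n → Finset (Fin n)) (s : Finset (Fin n)) : ℚ :=
  ∑ i ∈ s, faUtil n (F i) i s

def coE (F : Fin n → Finset (Fin n)) (A B : Finset (Fin n)) : ℕ :=
  ∑ i ∈ A, (B ∩ F i).card

lemma faSW_eq (F : Fin n → Finset (Fin n)) (π : Finpartition (univ : Finset (Fin n))) :
    faSW n F π = ∑ C ∈ π.parts, coW F C := rfl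

lemma sum_parts_eq {M : Type*} [AddCommMonoid M] (π : Finpartition (univ : Finset (Fin n)))
    (g : Fin n → M) : ∑ C ∈ π.parts, ∑ i ∈ C, g i = ∑ i, g i := by
  have h := Finset.sum_biUnion (f := g) π.supIndep.pairwiseDisjoint
  simp only [id_eq] at h
  rw [← h, ← Finset.sup_eq_biUnion, π.sup_parts]

lemma coE_comm (F : Fin n → Finset (Fin n)) (hsymm : ∀ a b, a ∈ F b → b ∈ F a)
    (A B : Finset (Fin n)) : coE F A B = coE F B A := by
  have key : ∀ (A B : Finset (Fin n)), coE F A B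
      = ∑ i ∈ A, ∑ j ∈ B, (if j ∈ F i then 1 else 0) := by
    intro A B
    refine Finset.sum_congr rfl fun i _ => ?_
    rw [Finset.sum_boole]
    simp [Finset.filter_mem_eq_inter, Finset.inter_comm]
  rw [key, key, Finset.sum_comm]
  refine Finset.sum_congr rfl fun i _ => Finset.sum_congr rfl fun j _ => ?_
  congr 1
  exact propext ⟨fun hh => hsymm _ _ hh, fun hh => hsymm _ _ hh⟩

lemma faUtil_union (t : Finset (Fin n)) (i : Fin n) {A B : Finset (Fin n)}
    (hd : Disjoint A B) (hiB : i ∉ B) :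
    faUtil n t i (A ∪ B) = faUtil n t i A + ((B ∩ t).card : ℚ) - ((B \ t).card : ℚ) / n := by
  unfold faUtil
  have h1 : (A ∪ B) ∩ t = (A ∩ t) ∪ (B ∩ t) := Finset.union_inter_distrib_right ..
  have h2 : (A ∪ B) \ (t ∪ {i}) = (A \ (t ∪ {i})) ∪ (B \ (t ∪ {i})) :=
    Finset.union_sdiff_distrib ..
  have h3 : B \ (t ∪ {i}) = B \ t := by
    ext y; simp only [mem_sdiff, mem_union, mem_singleton]
    constructor
    · rintro ⟨hy, hy2⟩; exact ⟨hy, fun hh => hy2 (Or.inl hh)⟩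
    · rintro ⟨hy, hy2⟩
      refine ⟨hy, ?_⟩
      rintro (hh | rfl)
      · exact hy2 hh
      · exact hiB hy
  have c1 : ((A ∪ B) ∩ t).card = (A ∩ t).card + (B ∩ t).card := by
    rw [h1, Finset.card_union_of_disjoint (hd.mono inter_subset_left inter_subset_left)]
  have c2 : ((A ∪ B) \ (t ∪ {i})).card = (A \ (t ∪ {i})).card + (B \ t).card := by
    rw [h2, h3, Finset.card_union_of_disjoint (hd.mono sdiff_subset sdiff_subset)]
  rw [c1, c2]
  push_cast
  ring

lemma coW_union (F : Fin n → Finset (Fin n)) (hsymm : ∀ a b, a ∈ F b → b ∈ F a)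
    {A B : Finset (Fin n)} (hd : Disjoint A B) :
    coW F (A ∪ B) = coW F A + coW F B + 2 * (coE F A B : ℚ)
      - (2 / n) * ((A.card : ℚ) * (B.card : ℚ) - (coE F A B : ℚ)) := by
  unfold coW
  rw [Finset.sum_union hd]
  have hA : ∑ i ∈ A, faUtil n (F i) i (A ∪ B)
      = ∑ i ∈ A, (faUtil n (F i) i A + ((B ∩ F i).card : ℚ) - ((B \ F i).card : ℚ) / n) :=
    Finset.sum_congr rfl fun i hi =>
      faUtil_union (F i) i hd (disjoint_left.mp hd hi)
  have hB : ∑ i ∈ B, faUtil n (F i) i (A ∪ B)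
      = ∑ i ∈ B, (faUtil n (F i) i B + ((A ∩ F i).card : ℚ) - ((A \ F i).card : ℚ) / n) := by
    rw [Finset.union_comm]
    exact Finset.sum_congr rfl fun i hi =>
      faUtil_union (F i) i hd.symm (disjoint_left.mp hd.symm hi)
  rw [hA, hB]
  have sdA : ∀ (X Y : Finset (Fin n)), ∑ i ∈ X, ((Y \ F i).card : ℚ)
      = (X.card : ℚ) * (Y.card : ℚ) - (coE F X Y : ℚ) := by
    intro X Y
    have : ∀ i, ((Y \ F i).card : ℚ) = (Y.card : ℚ) - ((Y ∩ F i).card : ℚ) := by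
      intro i
      have := Finset.card_inter_add_card_sdiff Y (F i)
      push_cast [← this]
      ring
    rw [Finset.sum_congr rfl fun i _ => this i, Finset.sum_sub_distrib]
    simp only [Finset.sum_const, nsmul_eq_mul, coE]
    push_cast
    ring
  have eAB : ∑ i ∈ A, ((B ∩ F i).card : ℚ) = (coE F A B : ℚ) := by
    simp [coE]
  have eBA : ∑ i ∈ B, ((A ∩ F i).card : ℚ) = (coE F A B : ℚ) := by
    rw [coE_comm F hsymm A B]; simp [coE]
  simp only [Finset.sum_sub_distrib, Finset.sum_add_distrib, ← Finset.sum_div]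
  rw [sdA, sdA, eAB, eBA, coE_comm F hsymm B A]
  ring

end Gen

-- helper: parts are nonempty
lemma part_nonempty (π : Finpartition (univ : Finset (Fin (n)))) {C : Finset (Fin n)}
    (hC : C ∈ π.parts) : C.Nonempty := by
  rw [Finset.nonempty_iff_ne_empty]
  rintro rfl
  exact π.bot_notMem hC

lemma parts_disjoint (π : Finpartition (univ : Finset (Fin n))) {C D : Finset (Fin n)}
    (hC : C ∈ π.parts) (hD : D ∈ π.parts) (hCD : C ≠ D) : Disjoint C D :=
  π.supIndep.pairwiseDisjoint (Finset.mem_coe.mpr hC) (Finset.mem_coe.mpr hD) hCD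

lemma exists_split (π : Finpartition (univ : Finset (Fin n))) {C B : Finset (Fin n)}
    (hC : C ∈ π.parts) (hBC : B ⊆ C) (hB : B.Nonempty) (hBne : B ≠ C) :
    ∃ σ : Finpartition (univ : Finset (Fin n)),
      σ.parts = insert B (insert (C \ B) (π.parts.erase C)) := by
  have hCB : (C \ B).Nonempty := sdiff_nonempty.mpr fun hsub => hBne (Subset.antisymm hBC hsub)
  have holddisj : ∀ D ∈ π.parts.erase C, Disjoint C D := fun D hD =>
    parts_disjoint π hC (Finset.mem_of_mem_erase hD) (Ne.symm (Finset.ne_of_mem_erase hD))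
  refine ⟨⟨insert B (insert (C \ B) (π.parts.erase C)), ?_, ?_, ?_⟩, rfl⟩
  · rw [Finset.supIndep_iff_pairwiseDisjoint]
    intro u hu v hv huv
    simp only [Finset.coe_insert, Set.mem_insert_iff, Finset.mem_coe] at hu hv
    have hBd : Disjoint B (C \ B) := Finset.disjoint_sdiff
    have holdB : ∀ D ∈ π.parts.erase C, Disjoint B D := fun D hD =>
      (holddisj D hD).mono_left hBC
    have holdCB : ∀ D ∈ π.parts.erase C, Disjoint (C \ B) D := fun D hD =>
      (holddisj D hD).mono_left sdiff_subset
    have holdold : ∀ D ∈ π.parts.erase C, ∀ E ∈ π.parts.erase C, D ≠ E → Disjoint D E :=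
      fun D hD E hE hne => parts_disjoint π (Finset.mem_of_mem_erase hD)
        (Finset.mem_of_mem_erase hE) hne
    rcases hu with rfl | rfl | hu <;> rcases hv with rfl | rfl | hv
    · exact absurd rfl huv
    · exact hBd
    · exact holdB _ hv
    · exact hBd.symm
    · exact absurd rfl huv
    · exact holdCB _ hv
    · exact (holdB _ hu).symm
    · exact (holdCB _ hu).symm
    · exact holdold _ hu _ hv huv
  · have hps := π.sup_parts
    rw [← Finset.insert_erase hC, Finset.sup_insert] at hps
    rw [Finset.sup_insert, Finset.sup_insert]
    simp only [id_eq] at hps ⊢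
    rw [← sup_assoc]
    rw [show B ⊔ (C \ B) = C from by
      simpa [sup_eq_union] using Finset.union_sdiff_of_subset hBC]
    exact hps
  · simp only [Finset.mem_insert, bot_eq_empty]
    push_neg
    refine ⟨?_, ?_, fun hmem => π.bot_notMem (Finset.mem_of_mem_erase hmem)⟩
    · exact fun hh => hB.ne_empty hh.symm
    · exact fun hh => hCB.ne_empty hh.symm

lemma exists_merge (π : Finpartition (univ : Finset (Fin n))) {C D : Finset (Fin n)}
    (hC : C ∈ π.parts) (hD : D ∈ π.parts) (hCD : C ≠ D) :
    ∃ σ : Finpartition (univ : Finset (Fin n)),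
      σ.parts = insert (C ∪ D) ((π.parts.erase C).erase D) := by
  have hrep : insert C (insert D ((π.parts.erase C).erase D)) = π.parts := by
    have hee : (π.parts.erase C).erase D = (π.parts.erase D).erase C := by
      ext y; simp only [Finset.mem_erase]; tauto
    rw [hee, Finset.insert_comm, Finset.insert_erase (Finset.mem_erase.mpr ⟨hCD, hC⟩),
      Finset.insert_erase hD]
  have holddisj : ∀ E ∈ (π.parts.erase C).erase D, Disjoint (C ∪ D) E := by
    intro E hE
    have hE1 := Finset.mem_of_mem_erase (Finset.mem_of_mem_erase hE)
    have hne1 : E ≠ C := Finset.ne_of_mem_erase (Finset.mem_of_mem_erase hE)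
    have hne2 : E ≠ D := Finset.ne_of_mem_erase hE
    exact Finset.disjoint_union_left.mpr
      ⟨(parts_disjoint π hE1 hC hne1).symm, (parts_disjoint π hE1 hD hne2).symm⟩
  refine ⟨⟨insert (C ∪ D) ((π.parts.erase C).erase D), ?_, ?_, ?_⟩, rfl⟩
  · rw [Finset.supIndep_iff_pairwiseDisjoint]
    intro u hu v hv huv
    simp only [Finset.coe_insert, Set.mem_insert_iff, Finset.mem_coe] at hu hv
    rcases hu with rfl | hu <;> rcases hv with rfl | hv
    · exact absurd rfl huv
    · exact holddisj _ hv
    · exact (holddisj _ hu).symm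
    · exact parts_disjoint π (Finset.mem_of_mem_erase (Finset.mem_of_mem_erase hu))
        (Finset.mem_of_mem_erase (Finset.mem_of_mem_erase hv)) huv
  · have hps := π.sup_parts
    rw [← hrep, Finset.sup_insert, Finset.sup_insert] at hps
    rw [Finset.sup_insert]
    simp only [id_eq] at hps ⊢
    rw [show (C ∪ D : Finset (Fin n)) = C ⊔ D from rfl, sup_assoc]
    exact hps
  · simp only [Finset.mem_insert, bot_eq_empty]
    push_neg
    refine ⟨?_, fun hmem => π.bot_notMem
      (Finset.mem_of_mem_erase (Finset.mem_of_mem_erase hmem))⟩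
    intro hh
    exact ((part_nonempty π hC).mono (Finset.subset_union_left)).ne_empty hh.symm

lemma faSW_split (F : Fin n → Finset (Fin n)) (hsymm : ∀ a b, a ∈ F b → b ∈ F a)
    (π σ : Finpartition (univ : Finset (Fin n))) {C B : Finset (Fin n)}
    (hC : C ∈ π.parts) (hBC : B ⊆ C) (hB : B.Nonempty) (hBne : B ≠ C)
    (hσ : σ.parts = insert B (insert (C \ B) (π.parts.erase C))) :
    faSW n F σ = faSW n F π - 2 * (coE F B (C \ B) : ℚ)
      + (2 / n) * ((B.card : ℚ) * ((C \ B).card : ℚ) - (coE F B (C \ B) : ℚ)) := by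
  have hCB : (C \ B).Nonempty := sdiff_nonempty.mpr fun hsub => hBne (Subset.antisymm hBC hsub)
  have hB1 : B ∉ insert (C \ B) (π.parts.erase C) := by
    simp only [Finset.mem_insert]
    push_neg
    constructor
    · intro hh
      obtain ⟨y, hy⟩ := hB
      have : y ∈ C \ B := hh ▸ hy
      exact (Finset.mem_sdiff.mp this).2 hy
    · intro hh
      have hBp : B ∈ π.parts := Finset.mem_of_mem_erase hh
      have : Disjoint B C := parts_disjoint π hBp hC (Finset.ne_of_mem_erase hh)
      exact hB.ne_empty ((Finset.disjoint_self_iff_empty B).mp (this.mono_right hBC))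
  have hB2 : C \ B ∉ π.parts.erase C := by
    intro hh
    have hp : C \ B ∈ π.parts := Finset.mem_of_mem_erase hh
    have : Disjoint (C \ B) C := parts_disjoint π hp hC (Finset.ne_of_mem_erase hh)
    exact hCB.ne_empty ((Finset.disjoint_self_iff_empty _).mp (this.mono_right sdiff_subset))
  have hsum : faSW n F σ = coW F B + coW F (C \ B) + ∑ E ∈ π.parts.erase C, coW F E := by
    rw [faSW_eq, hσ, Finset.sum_insert hB1, Finset.sum_insert hB2]
    ring
  have hsum2 : faSW n F π = coW F C + ∑ E ∈ π.parts.erase C, coW F E := by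
    rw [faSW_eq, ← Finset.sum_erase_add _ _ hC]
    ring
  have hW : coW F C = coW F B + coW F (C \ B) + 2 * (coE F B (C \ B) : ℚ)
      - (2 / n) * ((B.card : ℚ) * ((C \ B).card : ℚ) - (coE F B (C \ B) : ℚ)) := by
    rw [← coW_union F hsymm Finset.disjoint_sdiff, Finset.union_sdiff_of_subset hBC]
  rw [hsum, hsum2, hW]
  ring

lemma faSW_merge (F : Fin n → Finset (Fin n)) (hsymm : ∀ a b, a ∈ F b → b ∈ F a)
    (π σ : Finpartition (univ : Finset (Fin n))) {C D : Finset (Fin n)}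
    (hC : C ∈ π.parts) (hD : D ∈ π.parts) (hCD : C ≠ D)
    (hσ : σ.parts = insert (C ∪ D) ((π.parts.erase C).erase D)) :
    faSW n F σ = faSW n F π + 2 * (coE F C D : ℚ)
      - (2 / n) * ((C.card : ℚ) * (D.card : ℚ) - (coE F C D : ℚ)) := by
  have hCD' : Disjoint C D := parts_disjoint π hC hD hCD
  have hnotmem : C ∪ D ∉ (π.parts.erase C).erase D := by
    intro hh
    have hp := Finset.mem_of_mem_erase (Finset.mem_of_mem_erase hh)
    have hne : C ∪ D ≠ C := Finset.ne_of_mem_erase (Finset.mem_of_mem_erase hh)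
    have : Disjoint (C ∪ D) C := parts_disjoint π hp hC hne
    exact (part_nonempty π hC).ne_empty
      ((Finset.disjoint_self_iff_empty _).mp (this.mono_left Finset.subset_union_left))
  have hDe : D ∈ π.parts.erase C := Finset.mem_erase.mpr ⟨Ne.symm hCD, hD⟩
  have hsum : faSW n F σ = coW F (C ∪ D) + ∑ E ∈ (π.parts.erase C).erase D, coW F E := by
    rw [faSW_eq, hσ, Finset.sum_insert hnotmem]
  have hsum2 : faSW n F π
      = coW F C + coW F D + ∑ E ∈ (π.parts.erase C).erase D, coW F E := by
    rw [faSW_eq, ← Finset.sum_erase_add _ _ hC, ← Finset.sum_erase_add _ _ hDe]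
    ring
  rw [hsum, hsum2, coW_union F hsymm hCD']
  ring

-- ===== division helpers and move inequality =====
section MoveIneq
variable {n : ℕ}

lemma qdiv_le {nq A e : ℚ} (hn : 0 < nq) (h : (2 / nq) * A ≤ 2 * e) : A ≤ nq * e := by
  rw [div_mul_eq_mul_div, div_le_iff₀ hn] at h
  nlinarith

lemma le_qdiv {nq A e : ℚ} (hn : 0 < nq) (h : 2 * e ≤ (2 / nq) * A) : nq * e ≤ A := by
  rw [div_mul_eq_mul_div, le_div_iff₀ hn] at h
  nlinarith

lemma move_ineq (F : Fin n → Finset (Fin n)) (hsymm : ∀ a b, a ∈ F b → b ∈ F a)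
    (hn0 : 0 < n) (π : Finpartition (univ : Finset (Fin n)))
    (hopt : ∀ σ : Finpartition (univ : Finset (Fin n)), faSW n F σ ≤ faSW n F π)
    {C D Sx : Finset (Fin n)} (hC : C ∈ π.parts) (hD : D ∈ π.parts) (hCD : C ≠ D)
    (hS : Sx ⊆ C) (hSne : Sx.Nonempty) :
    (coE F Sx D : ℚ) * (n + 1) + (Sx.card : ℚ) * ((C \ Sx).card : ℚ)
      ≤ (coE F Sx (C \ Sx) : ℚ) * (n + 1) + (Sx.card : ℚ) * (D.card : ℚ) := by
  have hnq : (0 : ℚ) < n := by exact_mod_cast hn0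
  by_cases hSC : Sx = C
  · subst hSC
    obtain ⟨σ, hσ⟩ := exists_merge π hC hD hCD
    have hsw := faSW_merge F hsymm π σ hC hD hCD hσ
    have hle := hopt σ
    have h1 : 2 * (coE F Sx D : ℚ)
        ≤ (2 / n) * ((Sx.card : ℚ) * (D.card : ℚ) - (coE F Sx D : ℚ)) := by linarith
    have h2 := le_qdiv hnq h1
    have h3 : (Sx \ Sx : Finset (Fin n)) = ∅ := by simp
    have h4 : coE F Sx (Sx \ Sx) = 0 := by simp [h3, coE]
    rw [h4, h3]
    simp only [card_empty, Nat.cast_zero, mul_zero, zero_mul]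
    nlinarith [h2]
  · obtain ⟨σ₁, hσ₁⟩ := exists_split π hC hS hSne hSC
    have hsw1 := faSW_split F hsymm π σ₁ hC hS hSne hSC hσ₁
    have hSp : Sx ∈ σ₁.parts := by rw [hσ₁]; exact mem_insert_self _ _
    have hDp : D ∈ σ₁.parts := by
      rw [hσ₁]
      have hDC : D ≠ C := Ne.symm hCD
      have hDcs : D ≠ C \ Sx := by
        intro hh
        have : Disjoint C D := parts_disjoint π hC hD hCD
        obtain ⟨y, hy⟩ := part_nonempty π hD
        have hyC : y ∈ C := (hh ▸ hy : y ∈ C \ Sx) |> mem_sdiff.mp |>.1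
        exact (disjoint_right.mp this hy) hyC
      have hDS : D ≠ Sx := by
        intro hh
        have hdisj : Disjoint C D := parts_disjoint π hC hD hCD
        obtain ⟨y, hy⟩ := hSne
        exact (disjoint_right.mp hdisj (hh ▸ hy)) (hS hy)
      exact mem_insert_of_mem (mem_insert_of_mem (mem_erase.mpr ⟨hDC, hD⟩))
    have hSD : Sx ≠ D := by
      intro hh
      have hdisj : Disjoint C D := parts_disjoint π hC hD hCD
      obtain ⟨y, hy⟩ := hSne
      exact (disjoint_right.mp hdisj (hh ▸ hy)) (hS hy)
    obtain ⟨σ₂, hσ₂⟩ := exists_merge σ₁ hSp hDp hSD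
    have hsw2 := faSW_merge F hsymm σ₁ σ₂ hSp hDp hSD hσ₂
    have hle := hopt σ₂
    set e1 : ℚ := (coE F Sx (C \ Sx) : ℚ)
    set e3 : ℚ := (coE F Sx D : ℚ)
    set c : ℚ := (Sx.card : ℚ)
    set cc : ℚ := ((C \ Sx).card : ℚ)
    set dd : ℚ := (D.card : ℚ)
    have h1 : (2 / n) * ((c * cc - e1) - (c * dd - e3)) ≤ 2 * (e1 - e3) := by
      rw [hsw2, hsw1] at hle
      linarith
    have h2 := qdiv_le hnq h1
    linarith
end MoveIneq


/-- The reduced FA instance built from a `3`-Partition instance `x : Fin (3m) → ℕ`: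
the `n` agents are the disjoint union of element-cliques `elemClique h` of size `x h`
and set-cliques `setClique k` of size `X = 4m²T`; each clique is bidirectional, and
between each element-clique and each set-clique there is a perfect matching of the
element-clique into the set-clique; no other friendship relations exist. -/
structure ReducedFA (m T n : ℕ) (x : Fin (3 * m) → ℕ) where
  F : Fin n → Finset (Fin n)
  elemClique : Fin (3 * m) → Finset (Fin n)
  setClique : Fin m → Finset (Fin n)
  irrefl : ∀ a, a ∉ F a
  symm : ∀ a b, a ∈ F b → b ∈ F a
  elem_card : ∀ h, (elemClique h).card = x h
  set_card : ∀ k, (setClique k).card = 4 * m ^ 2 * T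
  elem_disj : ∀ h h', h ≠ h' → Disjoint (elemClique h) (elemClique h')
  set_disj : ∀ k k', k ≠ k' → Disjoint (setClique k) (setClique k')
  elem_set_disj : ∀ h k, Disjoint (elemClique h) (setClique k)
  cover : (Finset.univ.biUnion elemClique) ∪ (Finset.univ.biUnion setClique)
    = (Finset.univ : Finset (Fin n))
  elem_clique : ∀ h, ∀ a ∈ elemClique h, ∀ b ∈ elemClique h, a ≠ b → b ∈ F a
  set_clique : ∀ k, ∀ a ∈ setClique k, ∀ b ∈ setClique k, a ≠ b → b ∈ F a
  matching : ∀ (h : Fin (3 * m)) (k : Fin m), ∀ a ∈ elemClique h,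
    (setClique k ∩ F a).card = 1
  matching_inj : ∀ (h : Fin (3 * m)) (k : Fin m), ∀ b ∈ setClique k,
    (elemClique h ∩ F b).card ≤ 1
  elem_elem : ∀ h h', h ≠ h' → ∀ a ∈ elemClique h, ∀ b ∈ elemClique h', b ∉ F a
  set_set : ∀ k k', k ≠ k' → ∀ a ∈ setClique k, ∀ b ∈ setClique k', b ∉ F a

set_option maxHeartbeats 3200000 in
/-- In the reduced FA instance with `m > 1`, every element-clique is entirely contained
in a single coalition of any optimal partition. -/
theorem stmt10 (m T n : ℕ) (hm : 1 < m) (hT : 0 < T)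
    (x : Fin (3 * m) → ℕ)
    (hsum : ∑ h, x h = m * T)
    (hx : ∀ h, T < 4 * x h ∧ 2 * x h < T)
    (hn : n = m * T + 4 * m ^ 3 * T)
    (R : ReducedFA m T n x)
    (π : Finpartition (univ : Finset (Fin n)))
    (hopt : ∀ σ : Finpartition (univ : Finset (Fin n)), faSW n R.F σ ≤ faSW n R.F π) :
    ∀ h : Fin (3 * m), ∃ C ∈ π.parts, R.elemClique h ⊆ C := by
  classical
  obtain ⟨F, EK, SK, hirr, hsym, hecard, hscard, hedisj, hsdisj, hesdisj, hcover,
    heclq, hsclq, hmatch, hmatchinj, heel, hss⟩ := R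
  simp only at hopt ⊢
  have hn0 : 0 < n := by
    subst hn
    have h1 : 0 < m := by omega
    positivity
  have hx1 : ∀ h', 0 < x h' := fun h' => by have := (hx h').1; omega
  have hmem : ∀ a : Fin n, (∃ h', a ∈ EK h') ∨ (∃ k, a ∈ SK k) := by
    intro a
    have h2 : a ∈ (Finset.univ.biUnion EK) ∪ (Finset.univ.biUnion SK) := by
      rw [hcover]; exact mem_univ a
    simpa [mem_union, mem_biUnion] using h2
  have hKne : ∀ h', (EK h').Nonempty := fun h' => by
    rw [← card_pos, hecard]; exact hx1 h'
  have hSne : ∀ k, (SK k).Nonempty := fun k => by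
    rw [← card_pos, hscard]
    have h1 : 0 < m := by omega
    positivity
  -- counting a finset by cliques
  have hcards : ∀ s : Finset (Fin n),
      s.card = ∑ h', (s ∩ EK h').card + ∑ k, (s ∩ SK k).card := by
    intro s
    have h1 : s = (univ.biUnion fun h' => s ∩ EK h') ∪ (univ.biUnion fun k => s ∩ SK k) := by
      ext a
      simp only [mem_union, mem_biUnion, mem_univ, true_and, mem_inter]
      constructor
      · intro ha
        rcases hmem a with ⟨h', hh⟩ | ⟨k, hk⟩
        · exact Or.inl ⟨h', ha, hh⟩
        · exact Or.inr ⟨k, ha, hk⟩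
      · rintro (⟨h', ha, _⟩ | ⟨k, ha, _⟩) <;> exact ha
    have hd : Disjoint (univ.biUnion fun h' => s ∩ EK h')
        (univ.biUnion fun k => s ∩ SK k) := by
      rw [Finset.disjoint_biUnion_left]
      intro h' _
      rw [Finset.disjoint_biUnion_right]
      intro k _
      exact (hesdisj h' k).mono inter_subset_right inter_subset_right
    have hc := congrArg Finset.card h1
    rwa [Finset.card_union_of_disjoint hd,
      Finset.card_biUnion
        (fun a _ b _ hab => (hedisj a b hab).mono inter_subset_right inter_subset_right),
      Finset.card_biUnion
        (fun a _ b _ hab => (hsdisj a b hab).mono inter_subset_right inter_subset_right)] at hc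
  have hFK : ∀ h', ∀ i ∈ EK h', F i ∩ EK h' = (EK h').erase i := by
    intro h' i hi
    ext y
    simp only [mem_inter, mem_erase]
    constructor
    · rintro ⟨hyF, hyK⟩
      exact ⟨fun hh => hirr i (hh ▸ hyF), hyK⟩
    · rintro ⟨hne, hyK⟩
      exact ⟨heclq h' i hi y hyK (fun hh => hne hh.symm), hyK⟩
  have hFS : ∀ k, ∀ i ∈ SK k, F i ∩ SK k = (SK k).erase i := by
    intro k i hi
    ext y
    simp only [mem_inter, mem_erase]
    constructor
    · rintro ⟨hyF, hyK⟩
      exact ⟨fun hh => hirr i (hh ▸ hyF), hyK⟩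
    · rintro ⟨hne, hyK⟩
      exact ⟨hsclq k i hi y hyK (fun hh => hne hh.symm), hyK⟩
  have hFKO : ∀ h' h'', h' ≠ h'' → ∀ i ∈ EK h', F i ∩ EK h'' = ∅ := by
    intro h' h'' hne i hi
    ext y
    simp only [mem_inter, notMem_empty, iff_false, not_and]
    intro hyF hyK
    exact heel h' h'' hne i hi y hyK hyF
  have hFSO : ∀ k k', k ≠ k' → ∀ i ∈ SK k, F i ∩ SK k' = ∅ := by
    intro k k' hne i hi
    ext y
    simp only [mem_inter, notMem_empty, iff_false, not_and]
    intro hyF hyK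
    exact hss k k' hne i hi y hyK hyF
  have hFSE : ∀ h' k, ∀ i ∈ EK h', (F i ∩ SK k).card = 1 := fun h' k i hi => by
    rw [inter_comm]; exact hmatch h' k i hi
  have hKSdistinct : ∀ h' k, EK h' ≠ SK k := by
    intro h' k hh
    obtain ⟨y, hy⟩ := hKne h'
    exact (disjoint_left.mp (hesdisj h' k) hy) (hh ▸ hy)
  have hKinj : ∀ h1 h2 : Fin (3 * m), EK h1 = EK h2 → h1 = h2 := by
    intro h1 h2 hh
    by_contra hne
    obtain ⟨y, hy⟩ := hKne h1
    exact (disjoint_left.mp (hedisj h1 h2 hne) hy) (hh ▸ hy)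
  have hSinj : ∀ k1 k2 : Fin m, SK k1 = SK k2 → k1 = k2 := by
    intro k1 k2 hh
    by_contra hne
    obtain ⟨y, hy⟩ := hSne k1
    exact (disjoint_left.mp (hsdisj k1 k2 hne) hy) (hh ▸ hy)
  have hdisjimg : Disjoint (univ.image EK) (univ.image SK) := by
    rw [Finset.disjoint_left]
    intro u hu hv
    obtain ⟨h1, -, rfl⟩ := Finset.mem_image.mp hu
    obtain ⟨k1, -, hk1⟩ := Finset.mem_image.mp hv
    exact hKSdistinct h1 k1 hk1.symm
  obtain ⟨σ₀, hσ₀⟩ : ∃ σ₀ : Finpartition (univ : Finset (Fin n)),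
      σ₀.parts = (univ.image EK) ∪ (univ.image SK) := by
    refine ⟨⟨(univ.image EK) ∪ (univ.image SK), ?_, ?_, ?_⟩, rfl⟩
    · rw [Finset.supIndep_iff_pairwiseDisjoint]
      intro u hu v hv huv
      simp only [coe_union, Set.mem_union, coe_image, Set.mem_image, mem_coe,
        Set.mem_setOf_eq] at hu hv
      rcases hu with ⟨h1, -, rfl⟩ | ⟨k1, -, rfl⟩ <;> rcases hv with ⟨h2, -, rfl⟩ | ⟨k2, -, rfl⟩
      · exact hedisj h1 h2 fun hh => huv (by rw [hh])
      · exact hesdisj h1 k2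
      · exact (hesdisj h2 k1).symm
      · exact hsdisj k1 k2 fun hh => huv (by rw [hh])
    · rw [Finset.sup_union, Finset.sup_image, Finset.sup_image]
      simp only [Function.id_comp]
      rw [Finset.sup_eq_biUnion, Finset.sup_eq_biUnion]
      exact hcover
    · intro hbot
      rcases Finset.mem_union.mp hbot with hb | hb
      · obtain ⟨h1, -, hh⟩ := Finset.mem_image.mp hb
        exact (hKne h1).ne_empty hh
      · obtain ⟨k1, -, hh⟩ := Finset.mem_image.mp hb
        exact (hSne k1).ne_empty hh
  have hsplitsum : ∀ g : Fin n → ℚ,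
      (∑ h', ∑ i ∈ EK h', g i) + (∑ k, ∑ i ∈ SK k, g i) = ∑ i, g i := by
    intro g
    have hps := sum_parts_eq σ₀ g
    rw [hσ₀, Finset.sum_union hdisjimg,
      Finset.sum_image (fun a _ b _ hab => hKinj a b hab),
      Finset.sum_image (fun a _ b _ hab => hSinj a b hab)] at hps
    exact hps
  -- the inter-card / sdiff-card identity in ℚ
  have hcc : ∀ (Q : Finset (Fin n)) (i : Fin n), ((Q ∩ F i).card : ℚ)
      = ((F i).card : ℚ) - (((F i) \ Q).card : ℚ) := by
    intro Q i
    have hq := Finset.card_inter_add_card_sdiff (F i) Q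
    rw [inter_comm]
    push_cast [← hq]
    ring
  set Mq : ℕ := ∑ C ∈ π.parts, ∑ i ∈ C, ((F i) \ C).card with hMq
  have budget : (Mq : ℚ) ≤ 2 * (m : ℚ)^2 * T := by
    have hupper : faSW n F π ≤ (∑ i, ((F i).card : ℚ)) - (Mq : ℚ) := by
      have step1 : faSW n F π ≤ ∑ C ∈ π.parts, ∑ i ∈ C,
          (((F i).card : ℚ) - (((F i) \ C).card : ℚ)) := by
        refine Finset.sum_le_sum fun C hC' => Finset.sum_le_sum fun i hi => ?_
        unfold faUtil
        rw [hcc C i]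
        have hpos : (0:ℚ) ≤ ((C \ (F i ∪ {i})).card : ℚ) / n :=
            div_nonneg (Nat.cast_nonneg _) (Nat.cast_nonneg _)
        linarith
      have step2 : ∑ C ∈ π.parts, ∑ i ∈ C, (((F i).card : ℚ) - (((F i) \ C).card : ℚ))
          = (∑ i, ((F i).card : ℚ)) - (Mq : ℚ) := by
        simp only [Finset.sum_sub_distrib]
        rw [sum_parts_eq π (fun i => ((F i).card : ℚ)), hMq]
        push_cast
        ring
      linarith
    have hclq : ∀ Q : Finset (Fin n), (∀ i ∈ Q, ∀ y ∈ Q, y ≠ i → y ∈ F i) →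
        coW F Q = ∑ i ∈ Q, (((F i).card : ℚ) - (((F i) \ Q).card : ℚ)) := by
      intro Q hQ
      unfold coW faUtil
      refine Finset.sum_congr rfl fun i hi => ?_
      have hz : Q \ (F i ∪ {i}) = ∅ := by
        ext y
        simp only [mem_sdiff, mem_union, mem_singleton, notMem_empty, iff_false, not_and,
          not_not]
        intro hy
        rcases eq_or_ne y i with rfl | hne
        · exact Or.inr rfl
        · exact Or.inl (hQ i hi y hy hne)
      rw [hz, hcc Q i]
      simp
    have hEval1 : ∀ h', ∑ i ∈ EK h', (((F i) \ EK h').card : ℚ) = (x h' : ℚ) * m := by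
      intro h'
      have hpt : ∀ i ∈ EK h', (((F i) \ EK h').card : ℚ) = (m : ℚ) := by
        intro i hi
        have hval : ((F i) \ EK h').card = m := by
          rw [hcards ((F i) \ EK h')]
          have hz1 : ∀ h'', (((F i) \ EK h') ∩ EK h'').card = 0 := by
            intro h''
            rw [Finset.card_eq_zero]
            rcases eq_or_ne h'' h' with rfl | hne
            · ext y
              simp only [mem_inter, mem_sdiff, notMem_empty, iff_false, not_and]
              tauto
            · have := hFKO h' h'' (Ne.symm hne) i hi
              ext y
              simp only [mem_inter, mem_sdiff, notMem_empty, iff_false, not_and]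
              intro hy hyK
              have : y ∈ F i ∩ EK h'' := Finset.mem_inter.mpr ⟨hy.1, hyK⟩
              rw [hFKO h' h'' (Ne.symm hne) i hi] at this
              exact absurd this (notMem_empty y)
          have hz2 : ∀ k, (((F i) \ EK h') ∩ SK k).card = 1 := by
            intro k
            have heq : ((F i) \ EK h') ∩ SK k = F i ∩ SK k := by
              ext y
              simp only [mem_inter, mem_sdiff]
              constructor
              · rintro ⟨⟨hy1, _⟩, hy3⟩; exact ⟨hy1, hy3⟩
              · rintro ⟨hy1, hy3⟩
                exact ⟨⟨hy1, fun hcon => (disjoint_left.mp (hesdisj h' k) hcon) hy3⟩, hy3⟩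
            rw [heq]
            exact hFSE h' k i hi
          simp only [hz1, hz2, Finset.sum_const_zero, Finset.sum_const, smul_eq_mul,
            mul_one, zero_add, card_univ, Fintype.card_fin]
        rw [hval]
      rw [Finset.sum_congr rfl hpt, Finset.sum_const, nsmul_eq_mul, hecard]
    have hEval2 : ∀ k, ∑ i ∈ SK k, (((F i) \ SK k).card : ℚ) = (m : ℚ) * T := by
      intro k
      have hpt : ∀ b ∈ SK k, ((F b) \ SK k).card = ∑ h'', (F b ∩ EK h'').card := by
        intro b hb
        rw [hcards ((F b) \ SK k)]
        have hz1 : ∀ h'', (((F b) \ SK k) ∩ EK h'') = F b ∩ EK h'' := by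
          intro h''
          ext y
          simp only [mem_inter, mem_sdiff]
          constructor
          · rintro ⟨⟨hy1, _⟩, hy3⟩; exact ⟨hy1, hy3⟩
          · rintro ⟨hy1, hy3⟩
            exact ⟨⟨hy1, fun hcon => (disjoint_left.mp (hesdisj h'' k) hy3) hcon⟩, hy3⟩
        have hz2 : ∀ l, (((F b) \ SK k) ∩ SK l).card = 0 := by
          intro l
          rw [Finset.card_eq_zero]
          rcases eq_or_ne l k with rfl | hne
          · ext y
            simp only [mem_inter, mem_sdiff, notMem_empty, iff_false, not_and]
            tauto
          · ext y
            simp only [mem_inter, mem_sdiff, notMem_empty, iff_false, not_and]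
            intro hy hyK
            have hmem2 : y ∈ F b ∩ SK l := Finset.mem_inter.mpr ⟨hy.1, hyK⟩
            rw [hFSO k l (Ne.symm hne) b hb] at hmem2
            exact absurd hmem2 (notMem_empty y)
        simp only [hz1, hz2, Finset.sum_const_zero, add_zero]
      have hsw : ∑ b ∈ SK k, (((F b) \ SK k).card : ℚ)
          = ∑ h'', ∑ b ∈ SK k, ((F b ∩ EK h'').card : ℚ) := by
        rw [Finset.sum_congr rfl fun b hb => by rw [hpt b hb]]
        push_cast
        rw [Finset.sum_comm]
      rw [hsw]
      have hcol : ∀ h'', ∑ b ∈ SK k, ((F b ∩ EK h'').card : ℚ) = (x h'' : ℚ) := by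
        intro h''
        have : ∑ b ∈ SK k, (EK h'' ∩ F b).card = coE F (SK k) (EK h'') := rfl
        have h2 : coE F (SK k) (EK h'') = coE F (EK h'') (SK k) := coE_comm F hsym _ _
        have h3 : coE F (EK h'') (SK k) = ∑ a ∈ EK h'', (SK k ∩ F a).card := rfl
        have h4 : ∑ a ∈ EK h'', (SK k ∩ F a).card = ∑ a ∈ EK h'', 1 :=
          Finset.sum_congr rfl fun a ha => hmatch h'' k a ha
        have h5 : ∑ b ∈ SK k, (F b ∩ EK h'').card = x h'' := by
          have h6 : ∑ b ∈ SK k, (F b ∩ EK h'').card = ∑ b ∈ SK k, (EK h'' ∩ F b).card :=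
            Finset.sum_congr rfl fun b _ => by rw [inter_comm]
          rw [h6, this, h2, h3, h4, Finset.sum_const, smul_eq_mul, mul_one, hecard]
        push_cast [← h5]
        ring
      rw [Finset.sum_congr rfl fun h'' _ => hcol h'']
      have : ∑ h'' : Fin (3 * m), (x h'' : ℚ) = ((m : ℚ) * T) := by
        exact_mod_cast hsum
      rw [this]
    have hlower : faSW n F σ₀ = (∑ i, ((F i).card : ℚ)) - 2 * (m : ℚ)^2 * T := by
      have hfa : faSW n F σ₀ = ∑ h', coW F (EK h') + ∑ k, coW F (SK k) := by
        rw [faSW_eq, hσ₀, Finset.sum_union hdisjimg,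
          Finset.sum_image (fun a _ b _ hab => hKinj a b hab),
          Finset.sum_image (fun a _ b _ hab => hSinj a b hab)]
      rw [hfa]
      have he : ∀ h', coW F (EK h')
          = (∑ i ∈ EK h', ((F i).card : ℚ)) - (x h' : ℚ) * m := by
        intro h'
        rw [hclq (EK h') (fun i hi y hy hne => heclq h' i hi y hy fun hh => hne hh.symm),
          Finset.sum_sub_distrib, hEval1 h']
      have hs : ∀ k, coW F (SK k)
          = (∑ i ∈ SK k, ((F i).card : ℚ)) - (m : ℚ) * T := by
        intro k
        rw [hclq (SK k) (fun i hi y hy hne => hsclq k i hi y hy fun hh => hne hh.symm),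
          Finset.sum_sub_distrib, hEval2 k]
      rw [Finset.sum_congr rfl fun h' _ => he h', Finset.sum_congr rfl fun k _ => hs k,
        Finset.sum_sub_distrib, Finset.sum_sub_distrib]
      rw [show (∑ h', ∑ i ∈ EK h', ((F i).card : ℚ)) - ∑ h', (x h' : ℚ) * (m:ℚ)
          + ((∑ k, ∑ i ∈ SK k, ((F i).card : ℚ)) - ∑ k : Fin m, (m : ℚ) * T)
          = ((∑ h', ∑ i ∈ EK h', ((F i).card : ℚ)) + (∑ k, ∑ i ∈ SK k, ((F i).card : ℚ)))
            - (∑ h', (x h' : ℚ) * (m:ℚ)) - (∑ k : Fin m, (m : ℚ) * T) from by ring]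
      rw [hsplitsum (fun i => ((F i).card : ℚ))]
      have hs1 : ∑ h', (x h' : ℚ) * (m:ℚ) = (m:ℚ)^2 * T := by
        rw [← Finset.sum_mul,
          show (∑ i, (x i : ℚ)) = (m:ℚ) * T from by exact_mod_cast hsum]
        ring
      have hs2 : ∑ k : Fin m, (m : ℚ) * T = (m:ℚ)^2 * T := by
        rw [Finset.sum_const, card_univ, Fintype.card_fin, nsmul_eq_mul]
        ring
      rw [hs1, hs2]
      ring
    have hcomp := hopt σ₀
    linarith
  have hmQ : (2:ℚ) ≤ (m:ℚ) := by exact_mod_cast hm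
  have hTQ : (1:ℚ) ≤ (T:ℚ) := by exact_mod_cast hT
  have hnq : (0:ℚ) < (n:ℚ) := by exact_mod_cast hn0
  have hnval : (n:ℚ) = (m:ℚ) * T + 4 * (m:ℚ)^3 * T := by exact_mod_cast hn
  have claimA : ∀ k, ∃ D ∈ π.parts, SK k ⊆ D := by
    intro k
    by_contra hno
    push_neg at hno
    have hXle : (SK k).card ≤ Mq := by
      have hpercount : ∀ C ∈ π.parts, (C ∩ SK k).card ≤ ∑ i ∈ C, ((F i) \ C).card := by
        intro C hC
        calc (C ∩ SK k).card = ∑ _i ∈ C ∩ SK k, 1 := by simp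
        _ ≤ ∑ i ∈ C ∩ SK k, ((F i) \ C).card := by
            refine Finset.sum_le_sum fun i hi => ?_
            obtain ⟨hiC, hiS⟩ := Finset.mem_inter.mp hi
            obtain ⟨v, hv, hvC⟩ := Finset.not_subset.mp (hno C hC)
            have hvi : v ≠ i := fun hh => hvC (hh ▸ hiC)
            have hvF : v ∈ F i := hsclq k i hiS v hv fun hh => hvi hh.symm
            exact Finset.card_pos.mpr ⟨v, Finset.mem_sdiff.mpr ⟨hvF, hvC⟩⟩
        _ ≤ ∑ i ∈ C, ((F i) \ C).card :=
            Finset.sum_le_sum_of_subset inter_subset_left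
      have h1 : ∀ C : Finset (Fin n),
          ∑ i ∈ C, (if i ∈ SK k then 1 else 0) = (C ∩ SK k).card := by
        intro C
        rw [Finset.sum_boole]
        simp [Finset.filter_mem_eq_inter]
      have hps := sum_parts_eq (M := ℕ) π (fun i => if i ∈ SK k then 1 else 0)
      have hcount : ∑ C ∈ π.parts, (C ∩ SK k).card = (SK k).card := by
        have h2 : ∑ C ∈ π.parts, (C ∩ SK k).card
            = ∑ C ∈ π.parts, ∑ i ∈ C, (if i ∈ SK k then 1 else 0) :=
          Finset.sum_congr rfl fun C _ => (h1 C).symm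
        rw [h2, hps, h1 univ, univ_inter]
      calc (SK k).card = ∑ C ∈ π.parts, (C ∩ SK k).card := hcount.symm
      _ ≤ ∑ C ∈ π.parts, ∑ i ∈ C, ((F i) \ C).card := Finset.sum_le_sum hpercount
    have h1 : ((SK k).card : ℚ) ≤ (Mq:ℚ) := by exact_mod_cast hXle
    rw [hscard k] at h1
    push_cast at h1
    nlinarith [budget]
  have claimB : ∀ C ∈ π.parts, ∀ k l, SK k ⊆ C → SK l ⊆ C → k = l := by
    intro C hC k l hk hl
    by_contra hkl
    have hdisjkl := hsdisj k l hkl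
    have hSlC : SK l ≠ C := by
      intro hh
      obtain ⟨y, hy⟩ := hSne k
      exact (disjoint_left.mp hdisjkl hy) (hh ▸ hk hy)
    obtain ⟨σ, hσ⟩ := exists_split π hC hl (hSne l) hSlC
    have hsw := faSW_split F hsym π σ hC hl (hSne l) hSlC hσ
    have hle := hopt σ
    have h1 : (2 / (n:ℚ)) * (((SK l).card : ℚ) * (((C \ SK l).card : ℚ))
        - (coE F (SK l) (C \ SK l) : ℚ)) ≤ 2 * (coE F (SK l) (C \ SK l) : ℚ) := by
      linarith
    have h2 := qdiv_le hnq h1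
    have he : coE F (SK l) (C \ SK l) ≤ m * T := by
      rw [coE_comm F hsym]
      have hpt : ∀ i ∈ C \ SK l,
          (SK l ∩ F i).card ≤ (if (∃ h'', i ∈ EK h'') then 1 else 0) := by
        intro i hi
        obtain ⟨hiC, hiS⟩ := Finset.mem_sdiff.mp hi
        rcases hmem i with ⟨h'', hih⟩ | ⟨j, hij⟩
        · rw [if_pos ⟨h'', hih⟩]
          exact le_of_eq (hmatch h'' l i hih)
        · have hjl : j ≠ l := fun hh => hiS (hh ▸ hij)
          have hz : SK l ∩ F i = ∅ := by rw [inter_comm]; exact hFSO j l hjl i hij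
          rw [hz]
          simp
      calc coE F (C \ SK l) (SK l) = ∑ i ∈ C \ SK l, (SK l ∩ F i).card := rfl
      _ ≤ ∑ i ∈ C \ SK l, (if (∃ h'', i ∈ EK h'') then 1 else 0) := Finset.sum_le_sum hpt
      _ ≤ ∑ i : Fin n, (if (∃ h'', i ∈ EK h'') then 1 else 0) :=
          Finset.sum_le_sum_of_subset (Finset.subset_univ _)
      _ = (univ.filter (fun i => ∃ h'', i ∈ EK h'')).card := by
          rw [Finset.sum_boole]; simp
      _ = (univ.biUnion EK).card := by
          congr 1
          ext i
          simp [mem_biUnion]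
      _ = ∑ h'', (EK h'').card := Finset.card_biUnion fun a _ b _ hab => hedisj a b hab
      _ = m * T := by rw [Finset.sum_congr rfl fun a _ => hecard a, hsum]
    have hsizes : (4 * m^2 * T : ℕ) ≤ (C \ SK l).card := by
      rw [← hscard k]
      exact Finset.card_le_card (Finset.subset_sdiff.mpr ⟨hk, hdisjkl⟩)
    have heq : (coE F (SK l) (C \ SK l) : ℚ) ≤ (m:ℚ) * T := by exact_mod_cast he
    have hccq : (4 * (m:ℚ)^2 * (T:ℚ)) ≤ ((C \ SK l).card : ℚ) := by exact_mod_cast hsizes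
    have hclq2 : ((SK l).card : ℚ) = 4 * (m:ℚ)^2 * T := by
      rw [hscard l]; push_cast; ring
    have henn : (0:ℚ) ≤ (coE F (SK l) (C \ SK l) : ℚ) := by positivity
    rw [hclq2] at h2
    have k1' := mul_le_mul_of_nonneg_left hccq (show (0:ℚ) ≤ 4*(m:ℚ)^2*T by positivity)
    have k3 : ((n:ℚ)+1)*(coE F (SK l) (C \ SK l) : ℚ) ≤ ((n:ℚ)+1)*((m:ℚ)*T) :=
      mul_le_mul_of_nonneg_left heq (by linarith)
    have k4 : ((n:ℚ)+1)*((m:ℚ)*T) = (m:ℚ)^2*T^2 + 4*(m:ℚ)^4*T^2 + (m:ℚ)*T := by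
      rw [hnval]; ring
    have h5 : 16*(m:ℚ)^4*(T:ℚ)^2
        ≤ (m:ℚ)^2*T^2 + 4*(m:ℚ)^4*T^2 + (m:ℚ)*T := by linarith [k1', k3, h2, k4]
    have hm4 : (4:ℚ) ≤ (m:ℚ)^2 := by nlinarith [hmQ]
    have f1 := mul_le_mul_of_nonneg_right hm4
      (show (0:ℚ) ≤ 12*(m:ℚ)^2*(T:ℚ)^2 by positivity)
    have hp : (2:ℚ)*1 ≤ (m:ℚ)*(T:ℚ) := mul_le_mul hmQ hTQ zero_le_one (by linarith)
    have f2 := mul_le_mul_of_nonneg_right (show (2:ℚ) ≤ (m:ℚ)*T by linarith)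
      (show (0:ℚ) ≤ (m:ℚ)*T by positivity)
    have f3 : (4:ℚ) ≤ ((m:ℚ)*T)*((m:ℚ)*T) := by nlinarith [hp]
    nlinarith [h5, f1, f2, f3]
  have hsetpart : ∀ C ∈ π.parts, ∀ v ∈ C, ∀ k, v ∈ SK k → SK k ⊆ C := by
    intro C hC v hv k hvk
    obtain ⟨D, hD, hkD⟩ := claimA k
    have hCD := π.eq_of_mem_parts hC hD hv (hkD hvk)
    rw [hCD]
    exact hkD
  -- ===== final argument =====
  intro h
  by_contra hno
  push_neg at hno
  obtain ⟨a, ha⟩ := hKne h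
  obtain ⟨C, hC, haC⟩ := π.exists_mem (mem_univ a)
  obtain ⟨b, hb, hbC⟩ := Finset.not_subset.mp (hno C hC)
  obtain ⟨D, hD, hbD⟩ := π.exists_mem (mem_univ b)
  have hCD : C ≠ D := fun hh => hbC (hh ▸ hbD)
  have hdisjCD : Disjoint C D := parts_disjoint π hC hD hCD
  have hScsub : C ∩ EK h ⊆ C := inter_subset_left
  have hScne : (C ∩ EK h).Nonempty := ⟨a, Finset.mem_inter.mpr ⟨haC, ha⟩⟩
  have hSdsub : D ∩ EK h ⊆ D := inter_subset_left
  have hSdne : (D ∩ EK h).Nonempty := ⟨b, Finset.mem_inter.mpr ⟨hbD, hb⟩⟩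
  -- an element agent has at most `σ_P` friends among the non-element members of `P`
  have hsetv : ∀ a', a' ∈ EK h → ∀ y, y ∉ EK h → y ∈ F a' → ∃ κ, y ∈ SK κ := by
    intro a' ha' y hyK hyF
    rcases hmem y with ⟨h'', hy⟩ | hy
    · rcases eq_or_ne h'' h with rfl | hne
      · exact absurd hy hyK
      · exact absurd hyF (heel h h'' (Ne.symm hne) a' ha' y hy)
    · exact hy
  have hFsingle : ∀ P ∈ π.parts, ∀ a' ∈ EK h, ((P \ EK h) ∩ F a').card
      ≤ (if ∃ κ, SK κ ⊆ P then 1 else 0) := by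
    intro P hP a' ha'
    by_cases hex : ((P \ EK h) ∩ F a').Nonempty
    · obtain ⟨y0, hy0⟩ := hex
      obtain ⟨hy01, hy0F⟩ := Finset.mem_inter.mp hy0
      obtain ⟨hy0P, hy0K⟩ := Finset.mem_sdiff.mp hy01
      obtain ⟨κ0, hκ0⟩ := hsetv a' ha' y0 hy0K hy0F
      have hκ0P : SK κ0 ⊆ P := hsetpart P hP y0 hy0P κ0 hκ0
      rw [if_pos ⟨κ0, hκ0P⟩]
      have hsub : (P \ EK h) ∩ F a' ⊆ SK κ0 ∩ F a' := by
        intro y hy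
        obtain ⟨hy1, hy2⟩ := Finset.mem_inter.mp hy
        obtain ⟨hyP, hyK⟩ := Finset.mem_sdiff.mp hy1
        obtain ⟨κ, hκ⟩ := hsetv a' ha' y hyK hy2
        have hκκ0 : κ = κ0 := claimB P hP κ κ0 (hsetpart P hP y hyP κ hκ) hκ0P
        exact Finset.mem_inter.mpr ⟨hκκ0 ▸ hκ, hy2⟩
      calc ((P \ EK h) ∩ F a').card ≤ (SK κ0 ∩ F a').card := Finset.card_le_card hsub
      _ = 1 := hmatch h κ0 a' ha'
    · rw [Finset.not_nonempty_iff_eq_empty] at hex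
      rw [hex]
      simp
  have hkey1 : ∀ P ∈ π.parts, coE F (P ∩ EK h) (P \ (P ∩ EK h))
      ≤ (P ∩ EK h).card * (if ∃ κ, SK κ ⊆ P then 1 else 0) := by
    intro P hP
    have hsd : P \ (P ∩ EK h) = P \ EK h := by
      ext y
      simp only [mem_sdiff, mem_inter]
      tauto
    calc coE F (P ∩ EK h) (P \ (P ∩ EK h))
        = ∑ a' ∈ P ∩ EK h, ((P \ EK h) ∩ F a').card := by rw [hsd]; rfl
    _ ≤ ∑ a' ∈ P ∩ EK h, (if ∃ κ, SK κ ⊆ P then 1 else 0) :=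
        Finset.sum_le_sum fun a' ha' => hFsingle P hP a' (Finset.mem_inter.mp ha').2
    _ = (P ∩ EK h).card * (if ∃ κ, SK κ ⊆ P then 1 else 0) := by
        rw [Finset.sum_const, smul_eq_mul]
  have hkey3 : ∀ P Q : Finset (Fin n), P ∈ π.parts → Q ∈ π.parts → P ≠ Q →
      (P ∩ EK h).card * ((Q ∩ EK h).card + (if ∃ κ, SK κ ⊆ Q then 1 else 0))
        ≤ coE F (P ∩ EK h) Q := by
    intro P Q hP hQ hPQ
    have hdisj := parts_disjoint π hP hQ hPQ
    have hpt : ∀ a' ∈ P ∩ EK h,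
        (Q ∩ EK h).card + (if ∃ κ, SK κ ⊆ Q then 1 else 0) ≤ (Q ∩ F a').card := by
      intro a' ha'
      obtain ⟨ha'P, ha'K⟩ := Finset.mem_inter.mp ha'
      have hchunk : Q ∩ EK h ⊆ Q ∩ F a' := by
        intro y hy
        obtain ⟨hyQ, hyK⟩ := Finset.mem_inter.mp hy
        have hya : y ≠ a' := fun hh => (disjoint_left.mp hdisj ha'P) (hh ▸ hyQ)
        exact Finset.mem_inter.mpr ⟨hyQ, heclq h a' ha'K y hyK fun hh => hya hh.symm⟩
      by_cases hex : ∃ κ, SK κ ⊆ Q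
      · obtain ⟨κ, hκ⟩ := hex
        rw [if_pos ⟨κ, hκ⟩]
        have hsub : (Q ∩ EK h) ∪ (SK κ ∩ F a') ⊆ Q ∩ F a' := by
          intro y hy
          rcases Finset.mem_union.mp hy with hy | hy
          · exact hchunk hy
          · obtain ⟨hyS, hyF⟩ := Finset.mem_inter.mp hy
            exact Finset.mem_inter.mpr ⟨hκ hyS, hyF⟩
        have hdisj2 : Disjoint (Q ∩ EK h) (SK κ ∩ F a') :=
          ((hesdisj h κ).symm.mono inter_subset_left inter_subset_right).symm
        have hcu : (Q ∩ EK h).card + 1 = ((Q ∩ EK h) ∪ (SK κ ∩ F a')).card := by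
          rw [Finset.card_union_of_disjoint hdisj2, hmatch h κ a' ha'K]
        rw [hcu]
        exact Finset.card_le_card hsub
      · rw [if_neg hex, add_zero]
        exact Finset.card_le_card hchunk
    calc (P ∩ EK h).card * ((Q ∩ EK h).card + (if ∃ κ, SK κ ⊆ Q then 1 else 0))
        = ∑ _a' ∈ P ∩ EK h, ((Q ∩ EK h).card + (if ∃ κ, SK κ ⊆ Q then 1 else 0)) := by
          rw [Finset.sum_const, smul_eq_mul]
    _ ≤ ∑ a' ∈ P ∩ EK h, (Q ∩ F a').card := Finset.sum_le_sum hpt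
    _ = coE F (P ∩ EK h) Q := rfl
  have hmv1 := move_ineq F hsym hn0 π hopt hC hD hCD hScsub hScne
  have hmv2 := move_ineq F hsym hn0 π hopt hD hC (Ne.symm hCD) hSdsub hSdne
  -- pass to ℚ
  have hk1 : (coE F (C ∩ EK h) (C \ (C ∩ EK h)) : ℚ)
      ≤ ((C ∩ EK h).card : ℚ) * ((if ∃ κ, SK κ ⊆ C then 1 else 0 : ℕ) : ℚ) := by
    exact_mod_cast hkey1 C hC
  have hk2 : (coE F (D ∩ EK h) (D \ (D ∩ EK h)) : ℚ)
      ≤ ((D ∩ EK h).card : ℚ) * ((if ∃ κ, SK κ ⊆ D then 1 else 0 : ℕ) : ℚ) := by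
    exact_mod_cast hkey1 D hD
  have hk3 : ((C ∩ EK h).card : ℚ)
        * (((D ∩ EK h).card : ℚ) + ((if ∃ κ, SK κ ⊆ D then 1 else 0 : ℕ) : ℚ))
      ≤ (coE F (C ∩ EK h) D : ℚ) := by
    exact_mod_cast hkey3 C D hC hD hCD
  have hk4 : ((D ∩ EK h).card : ℚ)
        * (((C ∩ EK h).card : ℚ) + ((if ∃ κ, SK κ ⊆ C then 1 else 0 : ℕ) : ℚ))
      ≤ (coE F (D ∩ EK h) C : ℚ) := by
    exact_mod_cast hkey3 D C hD hC (Ne.symm hCD)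
  have hccc : ((C \ (C ∩ EK h)).card : ℚ) + ((C ∩ EK h).card : ℚ) = (C.card : ℚ) := by
    exact_mod_cast Finset.card_sdiff_add_card_eq_card hScsub
  have hddd : ((D \ (D ∩ EK h)).card : ℚ) + ((D ∩ EK h).card : ℚ) = (D.card : ℚ) := by
    exact_mod_cast Finset.card_sdiff_add_card_eq_card hSdsub
  have hc1 : (1:ℚ) ≤ ((C ∩ EK h).card : ℚ) := by
    exact_mod_cast Finset.card_pos.mpr hScne
  have hd1 : (1:ℚ) ≤ ((D ∩ EK h).card : ℚ) := by
    exact_mod_cast Finset.card_pos.mpr hSdne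
  have hn1 : (1:ℚ) ≤ (n:ℚ) := by exact_mod_cast hn0
  have hnn : (0:ℚ) ≤ (n:ℚ) + 1 := by linarith
  have hA : ((C ∩ EK h).card : ℚ)
        * (((D ∩ EK h).card : ℚ) + ((if ∃ κ, SK κ ⊆ D then 1 else 0 : ℕ) : ℚ)) * ((n:ℚ)+1)
        + ((C ∩ EK h).card : ℚ) * ((C \ (C ∩ EK h)).card : ℚ)
      ≤ ((C ∩ EK h).card : ℚ) * ((if ∃ κ, SK κ ⊆ C then 1 else 0 : ℕ) : ℚ) * ((n:ℚ)+1)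
        + ((C ∩ EK h).card : ℚ) * (D.card : ℚ) := by
    have t1 := mul_le_mul_of_nonneg_right hk3 hnn
    have t2 := mul_le_mul_of_nonneg_right hk1 hnn
    linarith [hmv1]
  have hB : ((D ∩ EK h).card : ℚ)
        * (((C ∩ EK h).card : ℚ) + ((if ∃ κ, SK κ ⊆ C then 1 else 0 : ℕ) : ℚ)) * ((n:ℚ)+1)
        + ((D ∩ EK h).card : ℚ) * ((D \ (D ∩ EK h)).card : ℚ)
      ≤ ((D ∩ EK h).card : ℚ) * ((if ∃ κ, SK κ ⊆ D then 1 else 0 : ℕ) : ℚ) * ((n:ℚ)+1)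
        + ((D ∩ EK h).card : ℚ) * (C.card : ℚ) := by
    have t1 := mul_le_mul_of_nonneg_right hk4 hnn
    have t2 := mul_le_mul_of_nonneg_right hk2 hnn
    linarith [hmv2]
  rw [← hddd] at hA
  rw [← hccc] at hB
  have hA' := mul_le_mul_of_nonneg_left hA (by linarith : (0:ℚ) ≤ ((D ∩ EK h).card : ℚ))
  have hB' := mul_le_mul_of_nonneg_left hB (by linarith : (0:ℚ) ≤ ((C ∩ EK h).card : ℚ))
  have p1 : (1:ℚ)*1 ≤ ((C ∩ EK h).card : ℚ) * ((D ∩ EK h).card : ℚ) :=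
    mul_le_mul hc1 hd1 zero_le_one (by linarith)
  have p2 : (2:ℚ) ≤ ((C ∩ EK h).card : ℚ) + ((D ∩ EK h).card : ℚ) := by linarith
  have p3 : (1:ℚ)*2 ≤ (((C ∩ EK h).card : ℚ) * ((D ∩ EK h).card : ℚ))
      * (((C ∩ EK h).card : ℚ) + ((D ∩ EK h).card : ℚ)) :=
    mul_le_mul (by linarith) p2 (by norm_num) (by linarith)
  have p4 := mul_le_mul_of_nonneg_right hn1
    (show (0:ℚ) ≤ (((C ∩ EK h).card : ℚ) * ((D ∩ EK h).card : ℚ))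
      * (((C ∩ EK h).card : ℚ) + ((D ∩ EK h).card : ℚ)) by linarith)
  linarith [hA', hB', p3, p4]
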